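/- Let L ≥ 1 and let (A_l)_{l=1}^L and (B_l)_{l=1}^L be finite persistence diagrams, one pair per layer of a multilayer network, and let c_1, …, c_L ≥ 0 satisfy W∞(A_l, B_l) ≤ c_l for every l. Then the bottleneck distance between the stacked persistence diagrams satisfies W∞(A₁ + ⋯ + A_L, B₁ + ⋯ + B_L) ≤ max_{1 ≤ l ≤ L} c_l. In particular, W∞(A₁ + ⋯ + A_L, B₁ + ⋯ + B_L) ≤ max_{1 ≤ l ≤ L} W∞(A_l, B_l). -/

import Mathlib

/-- Orthogonal projection of a point of `ℝ²` onto the diagonal. -/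
noncomputable def diagProj (p : ℝ × ℝ) : ℝ × ℝ := ((p.1 + p.2) / 2, (p.1 + p.2) / 2)

/-- The bottleneck distance between two finite multisets `A`, `B` of points of `ℝ²`:
the infimum over multiset bijections `σ` from `A + π(B)` to `B + π(A)` (encoded as a
multiset `M` of pairs whose first components form `A + π(B)` and whose second components
form `B + π(A)`) of the maximum sup-norm displacement `‖p - σ(p)‖_∞` (taken to be `0`
when both augmented multisets are empty).  Note that `dist` on `ℝ × ℝ` is the sup-norm
distance. -/
noncomputable def bottleneck (A B : Multiset (ℝ × ℝ)) : ℝ :=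
  sInf { c : ℝ | ∃ M : Multiset ((ℝ × ℝ) × (ℝ × ℝ)),
      M.map Prod.fst = A + B.map diagProj ∧
      M.map Prod.snd = B + A.map diagProj ∧
      c = (M.map fun q => dist q.1 q.2).fold max 0 }

lemma fold_max_nonneg (s : Multiset ℝ) : 0 ≤ s.fold max 0 := by
  induction s using Multiset.induction with
  | empty => simp
  | cons a s ih =>
    simp only [Multiset.fold_cons_left]
    exact le_max_of_le_right ih

lemma le_fold_max {s : Multiset ℝ} {x : ℝ} (hx : x ∈ s) : x ≤ s.fold max 0 := by
  induction s using Multiset.induction with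
  | empty => simp at hx
  | cons a s ih =>
    simp only [Multiset.fold_cons_left]
    rcases Multiset.mem_cons.1 hx with h | h
    · exact h ▸ le_max_left _ _
    · exact le_max_of_le_right (ih h)

lemma fold_max_le {s : Multiset ℝ} {b : ℝ} (hb : 0 ≤ b) (h : ∀ x ∈ s, x ≤ b) :
    s.fold max 0 ≤ b := by
  induction s using Multiset.induction with
  | empty => simpa
  | cons a s ih =>
    simp only [Multiset.fold_cons_left]
    exact max_le (h a (Multiset.mem_cons_self _ _))
      (ih fun x hx => h x (Multiset.mem_cons_of_mem hx))

lemma bottleneck_set_nonempty (A B : Multiset (ℝ × ℝ)) :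
    Set.Nonempty { c : ℝ | ∃ M : Multiset ((ℝ × ℝ) × (ℝ × ℝ)),
      M.map Prod.fst = A + B.map diagProj ∧
      M.map Prod.snd = B + A.map diagProj ∧
      c = (M.map fun q => dist q.1 q.2).fold max 0 } := by
  set X := A + B.map diagProj with hX
  set Y := B + A.map diagProj with hY
  have hlen : X.toList.length = Y.toList.length := by
    simp [Multiset.length_toList, hX, hY, add_comm]
  refine ⟨_, ⟨(X.toList.zip Y.toList : List _), ?_, ?_, rfl⟩⟩
  · rw [Multiset.map_coe, List.map_fst_zip (le_of_eq hlen), Multiset.coe_toList]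
  · rw [Multiset.map_coe, List.map_snd_zip (ge_of_eq hlen), Multiset.coe_toList]

lemma bottleneck_set_bddBelow (A B : Multiset (ℝ × ℝ)) :
    BddBelow { c : ℝ | ∃ M : Multiset ((ℝ × ℝ) × (ℝ × ℝ)),
      M.map Prod.fst = A + B.map diagProj ∧
      M.map Prod.snd = B + A.map diagProj ∧
      c = (M.map fun q => dist q.1 q.2).fold max 0 } := by
  refine ⟨0, fun x hx => ?_⟩
  obtain ⟨M, -, -, rfl⟩ := hx
  exact fold_max_nonneg _

lemma bottleneck_nonneg (A B : Multiset (ℝ × ℝ)) : 0 ≤ bottleneck A B := by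
  apply Real.sInf_nonneg
  rintro x ⟨M, -, -, rfl⟩
  exact fold_max_nonneg _

lemma multiset_map_finsum {ι α β : Type*} (s : Finset ι) (g : ι → Multiset α)
    (f : α → β) : (∑ i ∈ s, g i).map f = ∑ i ∈ s, (g i).map f :=
  map_sum (Multiset.mapAddMonoidHom f) g s

lemma bottleneck_stacked_aux (L : ℕ) (A B : Fin L → Multiset (ℝ × ℝ))
    (c : Fin L → ℝ) (hc : ∀ l, 0 ≤ c l)
    (hbd : ∀ l, bottleneck (A l) (B l) ≤ c l)
    (hne : (Finset.univ : Finset (Fin L)).Nonempty) :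
    bottleneck (∑ l, A l) (∑ l, B l) ≤ Finset.univ.sup' hne c := by
  apply le_of_forall_pos_le_add
  intro ε hε
  have hM : ∀ l : Fin L, ∃ M : Multiset ((ℝ × ℝ) × (ℝ × ℝ)),
      M.map Prod.fst = A l + (B l).map diagProj ∧
      M.map Prod.snd = B l + (A l).map diagProj ∧
      (M.map fun q => dist q.1 q.2).fold max 0 < c l + ε := by
    intro l
    have hlt : bottleneck (A l) (B l) < c l + ε :=
      lt_of_le_of_lt (hbd l) (by linarith)
    obtain ⟨x, hx, hxlt⟩ := exists_lt_of_csInf_lt (bottleneck_set_nonempty (A l) (B l)) hlt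
    obtain ⟨M, h1, h2, rfl⟩ := hx
    exact ⟨M, h1, h2, hxlt⟩
  choose M hM1 hM2 hM3 using hM
  set N : Multiset ((ℝ × ℝ) × (ℝ × ℝ)) := ∑ l, M l with hN
  have hb : 0 ≤ Finset.univ.sup' hne c + ε := by
    obtain ⟨l, -⟩ := hne
    have := le_trans (hc l) (Finset.le_sup' c (Finset.mem_univ l))
    linarith
  have hcost : (N.map fun q => dist q.1 q.2).fold max 0 ≤ Finset.univ.sup' hne c + ε := by
    apply fold_max_le hb
    intro x hx
    obtain ⟨q, hq, rfl⟩ := Multiset.mem_map.1 hx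
    rw [hN, Multiset.mem_sum] at hq
    obtain ⟨l, -, hql⟩ := hq
    have h1 : dist q.1 q.2 ≤ ((M l).map fun q => dist q.1 q.2).fold max 0 :=
      le_fold_max (Multiset.mem_map_of_mem _ hql)
    have h2 : c l ≤ Finset.univ.sup' hne c := Finset.le_sup' c (Finset.mem_univ l)
    linarith [hM3 l]
  have hmem : (N.map fun q => dist q.1 q.2).fold max 0 ∈
      { c : ℝ | ∃ M : Multiset ((ℝ × ℝ) × (ℝ × ℝ)),
        M.map Prod.fst = (∑ l, A l) + (∑ l, B l).map diagProj ∧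
        M.map Prod.snd = (∑ l, B l) + (∑ l, A l).map diagProj ∧
        c = (M.map fun q => dist q.1 q.2).fold max 0 } := by
    refine ⟨N, ?_, ?_, rfl⟩
    · rw [hN, multiset_map_finsum]
      simp_rw [hM1]
      rw [Finset.sum_add_distrib, multiset_map_finsum]
    · rw [hN, multiset_map_finsum]
      simp_rw [hM2]
      rw [Finset.sum_add_distrib, multiset_map_finsum]
  exact le_trans (csInf_le (bottleneck_set_bddBelow _ _) hmem) hcost

/-- For `L ≥ 1` layers with finite persistence diagrams `A l`, `B l` (points on or above
the diagonal) and per-layer bounds `W∞(A l, B l) ≤ c l` with `c l ≥ 0`, the bottleneck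
distance between the stacked persistence diagrams satisfies
`W∞(A₁ + ⋯ + A_L, B₁ + ⋯ + B_L) ≤ max_l c l`; in particular it is at most
`max_l W∞(A l, B l)`. -/
theorem bottleneck_stacked_le (L : ℕ) (hL : 1 ≤ L)
    (A B : Fin L → Multiset (ℝ × ℝ))
    (hA : ∀ l, ∀ p ∈ A l, p.1 ≤ p.2) (hB : ∀ l, ∀ p ∈ B l, p.1 ≤ p.2)
    (c : Fin L → ℝ) (hc : ∀ l, 0 ≤ c l)
    (hbd : ∀ l, bottleneck (A l) (B l) ≤ c l)
    (hne : (Finset.univ : Finset (Fin L)).Nonempty) :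
    bottleneck (∑ l, A l) (∑ l, B l) ≤ Finset.univ.sup' hne c ∧
    bottleneck (∑ l, A l) (∑ l, B l)
      ≤ Finset.univ.sup' hne (fun l => bottleneck (A l) (B l)) := by
  exact ⟨bottleneck_stacked_aux L A B c hc hbd hne,
    bottleneck_stacked_aux L A B (fun l => bottleneck (A l) (B l))
      (fun l => bottleneck_nonneg _ _) (fun l => le_refl _) hne⟩
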